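/- Let H = [[R, o],[0,1]] ∈ SE(3) and let X(H) = [[Rᵀ, −Rᵀ o^],[0, Rᵀ]] be the 6×6 velocity transformation. For fixed v = (v_lin, ω) ∈ ℝ⁶, the left-trivialized derivative of the map H ↦ X(H)v, i.e., the linear map Δ ↦ d/dt|₀ X(H exp(tΔ^∧))v for Δ = (Δ_v, Δ_ω) ∈ ℝ⁶, equals in block matrix form [[Rᵀ ω^ R, Rᵀ (v_lin − o^ ω)^ R],[0, Rᵀ ω^ R]] applied to (Δ_v, Δ_ω). -/

import Mathlib

open Matrix

/-- Skew-symmetric (hat) matrix of a 3-vector: `(hat x) *ᵥ y = x ×₃ y`. -/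
def hat (x : Fin 3 → ℝ) : Matrix (Fin 3) (Fin 3) ℝ :=
  !![0, -x 2, x 1; x 2, 0, -x 0; -x 1, x 0, 0]

/-- The special orthogonal group SO(3) as a predicate. -/
def SO3 (R : Matrix (Fin 3) (Fin 3) ℝ) : Prop := Rᵀ * R = 1 ∧ R.det = 1

/-- A 3-vector as a 3×1 column matrix. -/
def colv (o : Fin 3 → ℝ) : Matrix (Fin 3) (Fin 1) ℝ := Matrix.of fun i _ => o i

/-- The homogeneous matrix `[[R, o],[0,1]]` of SE(3). -/
def homog (R : Matrix (Fin 3) (Fin 3) ℝ) (o : Fin 3 → ℝ) :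
    Matrix (Fin 3 ⊕ Fin 1) (Fin 3 ⊕ Fin 1) ℝ :=
  Matrix.fromBlocks R (colv o) 0 1

/-- The special Euclidean group SE(3) as a set of 4×4 matrices. -/
def SE3 : Set (Matrix (Fin 3 ⊕ Fin 1) (Fin 3 ⊕ Fin 1) ℝ) :=
  {H | ∃ R o, SO3 R ∧ H = homog R o}

/-- 6-vectors, written as `(linear part, angular part)` indexed by `Fin 3 ⊕ Fin 3`. -/
abbrev V6 := (Fin 3 ⊕ Fin 3) → ℝ

/-- Linear part of a 6-vector. -/
def linOf (v : V6) : Fin 3 → ℝ := fun i => v (Sum.inl i)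
/-- Angular part of a 6-vector. -/
def angOf (v : V6) : Fin 3 → ℝ := fun i => v (Sum.inr i)

/-- 6D cross product matrix `v× = [[ω^, v_lin^],[0, ω^]]`. -/
def hat6 (v : V6) : Matrix (Fin 3 ⊕ Fin 3) (Fin 3 ⊕ Fin 3) ℝ :=
  Matrix.fromBlocks (hat (angOf v)) (hat (linOf v)) 0 (hat (angOf v))

/-- 6D cross product of two 6-vectors. -/
def cross6 (v w : V6) : V6 := (hat6 v) *ᵥ w

/-- The wedge map `ℝ⁶ → se(3)`, `(v, ω) ↦ [[ω^, v],[0,0]]`. -/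
def wedge (v : V6) : Matrix (Fin 3 ⊕ Fin 1) (Fin 3 ⊕ Fin 1) ℝ :=
  Matrix.fromBlocks (hat (angOf v)) (colv (linOf v)) 0 0

/-- Rotation block of a homogeneous matrix. -/
def Rof (H : Matrix (Fin 3 ⊕ Fin 1) (Fin 3 ⊕ Fin 1) ℝ) : Matrix (Fin 3) (Fin 3) ℝ :=
  Matrix.of fun i j => H (Sum.inl i) (Sum.inl j)

/-- Translation block of a homogeneous matrix. -/
def oof (H : Matrix (Fin 3 ⊕ Fin 1) (Fin 3 ⊕ Fin 1) ℝ) : Fin 3 → ℝ :=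
  fun i => H (Sum.inl i) (Sum.inr 0)

/-- The 6×6 velocity transformation `X(H) = [[Rᵀ, −Rᵀ o^],[0, Rᵀ]]`. -/
def Xvel (H : Matrix (Fin 3 ⊕ Fin 1) (Fin 3 ⊕ Fin 1) ℝ) :
    Matrix (Fin 3 ⊕ Fin 3) (Fin 3 ⊕ Fin 3) ℝ :=
  Matrix.fromBlocks (Rof H)ᵀ (-((Rof H)ᵀ * hat (oof H))) 0 (Rof H)ᵀ
/-! ### Auxiliary lemmas -/

section Aux

@[simp] lemma hat_t (x : Fin 3 → ℝ) : (hat x)ᵀ = -hat x := by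
  ext i j; fin_cases i <;> fin_cases j <;> simp [hat]

lemma hat_anti (x y : Fin 3 → ℝ) : hat x *ᵥ y = -(hat y *ᵥ x) := by
  funext i
  fin_cases i <;>
    simp [hat, Matrix.mulVec, dotProduct, Fin.sum_univ_succ] <;> ring

lemma key_hat (A : Matrix (Fin 3) (Fin 3) ℝ) (x : Fin 3 → ℝ) :
    Aᵀ * hat (A *ᵥ x) * A = A.det • hat x := by
  ext i j
  fin_cases i <;> fin_cases j <;>
    simp [hat, Matrix.mul_apply, Matrix.mulVec, Matrix.det_fin_three, dotProduct,
      Fin.sum_univ_succ] <;> ring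

lemma SO3.mul_t {R : Matrix (Fin 3) (Fin 3) ℝ} (hR : SO3 R) : R * Rᵀ = 1 :=
  mul_eq_one_comm.mp hR.1

lemma rot_hat {R : Matrix (Fin 3) (Fin 3) ℝ} (hR : SO3 R) (x : Fin 3 → ℝ) :
    hat (R *ᵥ x) = R * hat x * Rᵀ := by
  have h1 : Rᵀ * hat (R *ᵥ x) * R = hat x := by
    rw [key_hat, hR.2, one_smul]
  calc hat (R *ᵥ x) = (R * Rᵀ) * hat (R *ᵥ x) * (R * Rᵀ) := by rw [hR.mul_t]; simp
    _ = R * (Rᵀ * hat (R *ᵥ x) * R) * Rᵀ := by simp only [Matrix.mul_assoc]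
    _ = R * hat x * Rᵀ := by rw [h1]

lemma SO3.t {R : Matrix (Fin 3) (Fin 3) ℝ} (hR : SO3 R) : SO3 Rᵀ :=
  ⟨by rw [Matrix.transpose_transpose]; exact hR.mul_t, by rw [Matrix.det_transpose]; exact hR.2⟩

lemma rot_hat' {R : Matrix (Fin 3) (Fin 3) ℝ} (hR : SO3 R) (x : Fin 3 → ℝ) :
    hat (Rᵀ *ᵥ x) = Rᵀ * hat x * R := by
  have := rot_hat hR.t x
  rwa [Matrix.transpose_transpose] at this

lemma bot_id {R : Matrix (Fin 3) (Fin 3) ℝ} (hR : SO3 R) (d w : Fin 3 → ℝ) :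
    (R * hat d)ᵀ *ᵥ w = (Rᵀ * hat w * R) *ᵥ d := by
  rw [Matrix.transpose_mul, hat_t, ← rot_hat' hR]
  rw [Matrix.neg_mul, Matrix.neg_mulVec, ← Matrix.mulVec_mulVec, hat_anti, neg_neg]

lemma third_id (R : Matrix (Fin 3) (Fin 3) ℝ) (d w : Fin 3 → ℝ) :
    (Rᵀ * hat (R *ᵥ d)) *ᵥ w = -((Rᵀ * hat w * R) *ᵥ d) := by
  rw [← Matrix.mulVec_mulVec, hat_anti, Matrix.mulVec_mulVec, Matrix.mulVec_neg,
    ← Matrix.mulVec_mulVec, ← Matrix.mulVec_mulVec, Matrix.mulVec_mulVec]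

/-- Rotation block of `homog`. -/
@[simp] lemma Rof_homog (R : Matrix (Fin 3) (Fin 3) ℝ) (o : Fin 3 → ℝ) :
    Rof (homog R o) = R := by
  ext i j; simp [Rof, homog, Matrix.fromBlocks]

@[simp] lemma oof_homog (R : Matrix (Fin 3) (Fin 3) ℝ) (o : Fin 3 → ℝ) :
    oof (homog R o) = o := by
  funext i; simp [oof, homog, Matrix.fromBlocks, colv]

@[simp] lemma Rof_fromBlocks (X : Matrix (Fin 3) (Fin 3) ℝ) (Y Z W) :
    Rof (Matrix.fromBlocks X Y Z W) = X := by
  ext i j; simp [Rof, Matrix.fromBlocks]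

@[simp] lemma oof_fromBlocks (X : Matrix (Fin 3) (Fin 3) ℝ) (Y : Matrix (Fin 3) (Fin 1) ℝ) (Z W) :
    oof (Matrix.fromBlocks X Y Z W) = fun i => Y i 0 := by
  funext i; simp [oof, Matrix.fromBlocks]

lemma homog_mul_wedge (R : Matrix (Fin 3) (Fin 3) ℝ) (o : Fin 3 → ℝ) (Δ : V6) :
    homog R o * wedge Δ =
      Matrix.fromBlocks (R * hat (angOf Δ)) (R * colv (linOf Δ)) 0 0 := by
  simp [homog, wedge, Matrix.fromBlocks_multiply]

lemma mul_colv (R : Matrix (Fin 3) (Fin 3) ℝ) (x : Fin 3 → ℝ) (i : Fin 3) :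
    (R * colv x) i 0 = (R *ᵥ x) i := by
  simp [Matrix.mul_apply, colv, Matrix.mulVec, dotProduct]

section Deriv

attribute [local instance] Matrix.linftyOpNormedRing Matrix.linftyOpNormedAlgebra

/-- Linear maps between finite-dimensional spaces transport `HasDerivAt`. -/
lemma lin_hasDerivAt {E F : Type*} [NormedAddCommGroup E] [NormedSpace ℝ E]
    [NormedAddCommGroup F] [NormedSpace ℝ F] [FiniteDimensional ℝ E]
    (L : E →ₗ[ℝ] F) {f : ℝ → E} {f' : E} {t : ℝ} (hf : HasDerivAt f f' t) :
    HasDerivAt (fun s => L (f s)) (L f') t := by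
  exact ((LinearMap.toContinuousLinearMap L).hasFDerivAt (x := f t)).comp_hasDerivAt t hf

/-- `M ↦ (Rof M)ᵀ` as a linear map. -/
noncomputable def L1v : Matrix (Fin 3 ⊕ Fin 1) (Fin 3 ⊕ Fin 1) ℝ →ₗ[ℝ] Matrix (Fin 3) (Fin 3) ℝ where
  toFun M := (Rof M)ᵀ
  map_add' M N := by ext i j; simp [Rof]
  map_smul' c M := by ext i j; simp [Rof]

@[simp] lemma L1v_apply (M) : L1v M = (Rof M)ᵀ := rfl

/-- `M ↦ hat (oof M)` as a linear map. -/
noncomputable def L2v : Matrix (Fin 3 ⊕ Fin 1) (Fin 3 ⊕ Fin 1) ℝ →ₗ[ℝ] Matrix (Fin 3) (Fin 3) ℝ where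
  toFun M := hat (oof M)
  map_add' M N := by
    ext i j; fin_cases i <;> fin_cases j <;> simp [hat, oof] <;> ring
  map_smul' c M := by
    ext i j; fin_cases i <;> fin_cases j <;> simp [hat, oof]

@[simp] lemma L2v_apply (M) : L2v M = hat (oof M) := rfl

/-- `M ↦ M *ᵥ w` as a linear map. -/
noncomputable def mvL (w : Fin 3 → ℝ) : Matrix (Fin 3) (Fin 3) ℝ →ₗ[ℝ] (Fin 3 → ℝ) where
  toFun M := M *ᵥ w
  map_add' A B := Matrix.add_mulVec A B w
  map_smul' c A := Matrix.smul_mulVec c A w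

@[simp] lemma mvL_apply (w M) : mvL w M = M *ᵥ w := rfl

lemma main_aux (R : Matrix (Fin 3) (Fin 3) ℝ) (o : Fin 3 → ℝ) (hR : SO3 R)
    (v : V6) (Δ : V6) :
    HasDerivAt
      (fun t : ℝ => Xvel (homog R o * NormedSpace.exp (t • wedge Δ)) *ᵥ v)
      ((Matrix.fromBlocks (Rᵀ * hat (angOf v) * R)
          (Rᵀ * hat (linOf v - (hat o) *ᵥ (angOf v)) * R)
          0 (Rᵀ * hat (angOf v) * R)) *ᵥ Δ) 0 := by
  set A := wedge Δ with hA
  set H := homog R o with hH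
  have e0 : NormedSpace.exp ((0 : ℝ) • A) = 1 := by
    rw [zero_smul]; exact NormedSpace.exp_zero
  have hRofHA : Rof (H * A) = R * hat (angOf Δ) := by
    rw [hH, hA, homog_mul_wedge, Rof_fromBlocks]
  have hoofHA : oof (H * A) = R *ᵥ linOf Δ := by
    rw [hH, hA, homog_mul_wedge, oof_fromBlocks]
    funext i; exact mul_colv R (linOf Δ) i
  have hE : HasDerivAt (fun t : ℝ => NormedSpace.exp (t • A)) A 0 := by
    have := hasDerivAt_exp_smul_const (𝕂 := ℝ) A 0
    simp at this; exact this
  have hP : HasDerivAt (fun t : ℝ => H * NormedSpace.exp (t • A)) (H * A) 0 :=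
    hE.const_mul H
  have h1 : HasDerivAt (fun t : ℝ => (Rof (H * NormedSpace.exp (t • A)))ᵀ)
      ((R * hat (angOf Δ))ᵀ) 0 := by
    have := lin_hasDerivAt L1v hP
    simp [hRofHA] at this ⊢; exact this
  have h2 : HasDerivAt (fun t : ℝ => hat (oof (H * NormedSpace.exp (t • A))))
      (hat (R *ᵥ linOf Δ)) 0 := by
    have := lin_hasDerivAt L2v hP
    simp [hoofHA] at this; exact this
  have h3 : HasDerivAt
      (fun t : ℝ => (Rof (H * NormedSpace.exp (t • A)))ᵀ * hat (oof (H * NormedSpace.exp (t • A))))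
      ((R * hat (angOf Δ))ᵀ * hat o + Rᵀ * hat (R *ᵥ linOf Δ)) 0 := by
    have := h1.mul h2
    simp [e0, hH] at this ⊢; exact this
  have htop : HasDerivAt
      (fun t : ℝ => (Rof (H * NormedSpace.exp (t • A)))ᵀ *ᵥ linOf v +
        (-((Rof (H * NormedSpace.exp (t • A)))ᵀ *
            hat (oof (H * NormedSpace.exp (t • A))))) *ᵥ angOf v)
      ((R * hat (angOf Δ))ᵀ *ᵥ linOf v +
        (-((R * hat (angOf Δ))ᵀ * hat o + Rᵀ * hat (R *ᵥ linOf Δ))) *ᵥ angOf v) 0 := by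
    exact (lin_hasDerivAt (mvL (linOf v)) h1).add (lin_hasDerivAt (mvL (angOf v)) h3.neg)
  have hbot : HasDerivAt
      (fun t : ℝ => (Rof (H * NormedSpace.exp (t • A)))ᵀ *ᵥ angOf v)
      ((R * hat (angOf Δ))ᵀ *ᵥ angOf v) 0 :=
    lin_hasDerivAt (mvL (angOf v)) h1
  -- rewrite the target function
  have hfun : (fun t : ℝ => Xvel (H * NormedSpace.exp (t • A)) *ᵥ v) =
      fun t : ℝ => Sum.elim
        ((Rof (H * NormedSpace.exp (t • A)))ᵀ *ᵥ linOf v +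
          (-((Rof (H * NormedSpace.exp (t • A)))ᵀ *
              hat (oof (H * NormedSpace.exp (t • A))))) *ᵥ angOf v)
        ((Rof (H * NormedSpace.exp (t • A)))ᵀ *ᵥ angOf v) := by
    funext t
    rw [Xvel, Matrix.fromBlocks_mulVec]
    simp [Matrix.zero_mulVec]
    rfl
  -- rewrite the target derivative
  have hder : (Matrix.fromBlocks (Rᵀ * hat (angOf v) * R)
        (Rᵀ * hat (linOf v - (hat o) *ᵥ (angOf v)) * R)
        0 (Rᵀ * hat (angOf v) * R)) *ᵥ Δ =
      Sum.elim
        ((R * hat (angOf Δ))ᵀ *ᵥ linOf v +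
          (-((R * hat (angOf Δ))ᵀ * hat o + Rᵀ * hat (R *ᵥ linOf Δ))) *ᵥ angOf v)
        ((R * hat (angOf Δ))ᵀ *ᵥ angOf v) := by
    rw [Matrix.fromBlocks_mulVec]
    have hb : (R * hat (angOf Δ))ᵀ *ᵥ angOf v = (Rᵀ * hat (angOf v) * R) *ᵥ angOf Δ :=
      bot_id hR _ _
    have ht : (R * hat (angOf Δ))ᵀ *ᵥ linOf v +
        (-((R * hat (angOf Δ))ᵀ * hat o + Rᵀ * hat (R *ᵥ linOf Δ))) *ᵥ angOf v =
        (Rᵀ * hat (angOf v) * R) *ᵥ linOf Δ +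
          (Rᵀ * hat (linOf v - hat o *ᵥ angOf v) * R) *ᵥ angOf Δ := by
      rw [Matrix.neg_mulVec, Matrix.add_mulVec, ← Matrix.mulVec_mulVec, third_id]
      rw [← bot_id hR (angOf Δ) (linOf v - hat o *ᵥ angOf v)]
      rw [Matrix.mulVec_sub]
      abel
    rw [hb, ht]
    simp only [show Δ ∘ Sum.inl = linOf Δ from rfl, show Δ ∘ Sum.inr = angOf Δ from rfl,
      Matrix.zero_mulVec, zero_add]
  rw [hfun, hder]
  exact hasDerivAt_pi.2 (by
    rintro (a | a)
    · exact hasDerivAt_pi.1 htop a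
    · exact hasDerivAt_pi.1 hbot a)

end Deriv

end Aux


/-- Left-trivialized derivative of `H ↦ X(H)v`: for `H = [[R,o],[0,1]] ∈ SE(3)` and fixed
`v = (v_lin, ω)`, the derivative at `t = 0` of `t ↦ X(H exp(t Δ^∧)) v` equals
`[[Rᵀ ω^ R, Rᵀ (v_lin − o^ ω)^ R],[0, Rᵀ ω^ R]] Δ`. -/
theorem leftTriv_deriv_Xvel (R : Matrix (Fin 3) (Fin 3) ℝ) (o : Fin 3 → ℝ) (hR : SO3 R)
    (v : V6) (Δ : V6) :
    HasDerivAt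
      (fun t : ℝ => Xvel (homog R o * NormedSpace.exp (t • wedge Δ)) *ᵥ v)
      ((Matrix.fromBlocks (Rᵀ * hat (angOf v) * R)
          (Rᵀ * hat (linOf v - (hat o) *ᵥ (angOf v)) * R)
          0 (Rᵀ * hat (angOf v) * R)) *ᵥ Δ) 0 := main_aux R o hR v Δ
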